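/- Let G be a finite simple graph on n ≥ 2 vertices and let k ≥ 0 be an integer. Then α_{k-reg}(G) = 1 if and only if k = 0 and, for every integer i, the set D_i(G) of vertices of degree i in G induces a clique in G (i.e., any two distinct vertices of G with the same degree are adjacent). -/

import Mathlib

open SimpleGraph

/-- The degree of a vertex `v` in `G`: the number of neighbors of `v`. -/
noncomputable def degN {V : Type*} (G : SimpleGraph V) (v : V) : ℕ := {u | G.Adj v u}.ncard

/-- A set of vertices is `k`-independent if the induced subgraph has maximum degree at
most `k`, i.e. every vertex of the set has at most `k` neighbors inside the set. -/
def IsKIndepSet {V : Type*} (G : SimpleGraph V) (k : ℕ) (S : Set V) : Prop :=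
  ∀ v ∈ S, {u | u ∈ S ∧ G.Adj v u}.ncard ≤ k

/-- A set of vertices is regular if all its vertices have the same degree in `G`. -/
def IsRegularSet {V : Type*} (G : SimpleGraph V) (S : Set V) : Prop :=
  ∀ u ∈ S, ∀ v ∈ S, degN G u = degN G v

/-- The regular `k`-independence number `α_{k-reg}(G)`: the maximum cardinality of a set
of vertices that is both `k`-independent and regular. -/
noncomputable def regKIndepNum {V : Type*} (G : SimpleGraph V) (k : ℕ) : ℕ :=
  sSup {m : ℕ | ∃ S : Set V, S.ncard = m ∧ IsKIndepSet G k S ∧ IsRegularSet G S}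

lemma degN_eq_degree {V : Type*} [Fintype V] (G : SimpleGraph V) [DecidableRel G.Adj]
    (v : V) : degN G v = G.degree v := by
  rw [degN, ← card_neighborFinset_eq_degree,
    show {u | G.Adj v u} = ↑(G.neighborFinset v) by ext u; simp, Set.ncard_coe_finset]

lemma exists_ne_degN_eq {V : Type*} [Fintype V] (G : SimpleGraph V)
    (hn : 2 ≤ Fintype.card V) : ∃ u v : V, u ≠ v ∧ degN G u = degN G v := by
  classical
  by_contra h
  push_neg at h
  have hinj : Function.Injective (fun v => (⟨G.degree v, G.degree_lt_card_verts v⟩ :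
      Fin (Fintype.card V))) := by
    intro a b hab
    by_contra hne
    exact h a b hne (by
      rw [degN_eq_degree, degN_eq_degree]
      exact congrArg Fin.val hab)
  have hbij : Function.Bijective (fun v => (⟨G.degree v, G.degree_lt_card_verts v⟩ :
      Fin (Fintype.card V))) :=
    (Fintype.bijective_iff_injective_and_card _).mpr ⟨hinj, by simp⟩
  obtain ⟨v0, hv0⟩ := hbij.surjective ⟨0, by omega⟩
  obtain ⟨v1, hv1⟩ := hbij.surjective ⟨Fintype.card V - 1, by omega⟩
  have hd0 : G.degree v0 = 0 := congrArg Fin.val hv0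
  have hd1 : G.degree v1 = Fintype.card V - 1 := congrArg Fin.val hv1
  have hne : v0 ≠ v1 := by
    intro he; rw [he, hd1] at hd0; omega
  have hsub : G.neighborFinset v1 ⊆ Finset.univ.erase v1 := by
    intro x hx
    rw [mem_neighborFinset] at hx
    exact Finset.mem_erase.mpr ⟨fun he => G.loopless.irrefl v1 (he ▸ hx), Finset.mem_univ x⟩
  have heq : G.neighborFinset v1 = Finset.univ.erase v1 :=
    Finset.eq_of_subset_of_card_le hsub (by
      rw [Finset.card_erase_of_mem (Finset.mem_univ v1), Finset.card_univ,
        card_neighborFinset_eq_degree, hd1])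
  have : v0 ∈ G.neighborFinset v1 := by
    rw [heq]; exact Finset.mem_erase.mpr ⟨hne, Finset.mem_univ v0⟩
  rw [mem_neighborFinset] at this
  have : 0 < G.degree v0 := G.degree_pos_iff_exists_adj v0 |>.mpr ⟨v1, this.symm⟩
  omega

theorem stmt_16 {V : Type*} [Fintype V] (G : SimpleGraph V) (k : ℕ)
    (hn : 2 ≤ Fintype.card V) :
    regKIndepNum G k = 1 ↔
      k = 0 ∧ ∀ u v : V, u ≠ v → degN G u = degN G v → G.Adj u v := by
  classical
  set A := {m : ℕ | ∃ S : Set V, S.ncard = m ∧ IsKIndepSet G k S ∧ IsRegularSet G S} with hA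
  have hbdd : BddAbove A := by
    refine ⟨Fintype.card V, fun m hm => ?_⟩
    obtain ⟨S, hS, -, -⟩ := hm
    rw [← hS]
    calc S.ncard ≤ (Set.univ : Set V).ncard :=
          Set.ncard_le_ncard (Set.subset_univ S) (Set.toFinite _)
      _ = Fintype.card V := by rw [Set.ncard_univ, Nat.card_eq_fintype_card]
  have hmem1 : 1 ∈ A := by
    have : Nonempty V := Fintype.card_pos_iff.mp (by omega)
    obtain ⟨v⟩ := this
    refine ⟨{v}, Set.ncard_singleton v, ?_, ?_⟩
    · intro w hw
      have : {u | u ∈ ({v} : Set V) ∧ G.Adj w u} = ∅ := by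
        ext u
        simp only [Set.mem_setOf_eq, Set.mem_singleton_iff, Set.mem_empty_iff_false,
          iff_false, not_and]
        rintro rfl
        rw [Set.mem_singleton_iff] at hw
        subst hw
        exact G.loopless.irrefl _
      rw [this, Set.ncard_empty]
      omega
    · rintro a ha b hb
      rw [Set.mem_singleton_iff] at ha hb
      rw [ha, hb]
  have pair_mem : ∀ u v : V, u ≠ v → degN G u = degN G v →
      (G.Adj u v → 1 ≤ k → 2 ∈ A) ∧ (¬ G.Adj u v → 2 ∈ A) := by
    intro u v huv hdeg
    have hreg : IsRegularSet G {u, v} := by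
      rintro a ha b hb
      rcases ha with rfl | ha <;> rcases hb with rfl | hb <;>
        first | rfl | (try rw [Set.mem_singleton_iff] at *) <;>
        (try subst_vars) <;> simp_all
    have hcard : ({u, v} : Set V).ncard = 2 := Set.ncard_pair huv
    constructor
    · intro hadj hk
      refine ⟨{u, v}, hcard, ?_, hreg⟩
      intro w hw
      have hsub : {x | x ∈ ({u, v} : Set V) ∧ G.Adj w x} ⊆ {u, v} \ {w} := by
        intro x hx
        exact ⟨hx.1, fun hxw => G.loopless.irrefl w (by rw [Set.mem_singleton_iff] at hxw; exact hxw ▸ hx.2)⟩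
      calc {x | x ∈ ({u, v} : Set V) ∧ G.Adj w x}.ncard
          ≤ (({u, v} : Set V) \ {w}).ncard := Set.ncard_le_ncard hsub (Set.toFinite _)
        _ ≤ 1 := by
            have hlt : (({u, v} : Set V) \ {w}).ncard < ({u, v} : Set V).ncard := by
              have : (({u, v} : Set V) \ {w}).ncard + 1 ≤ ({u, v} : Set V).ncard :=
                Set.ncard_diff_singleton_add_one hw (Set.toFinite _) ▸ le_refl _
              omega
            omega
        _ ≤ k := hk
    · intro hnadj
      refine ⟨{u, v}, hcard, ?_, hreg⟩
      intro w hw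
      have hw' : w = u ∨ w = v := hw
      have : {x | x ∈ ({u, v} : Set V) ∧ G.Adj w x} = ∅ := by
        ext x
        simp only [Set.mem_setOf_eq, Set.mem_insert_iff, Set.mem_singleton_iff,
          Set.mem_empty_iff_false, iff_false, not_and]
        rintro (rfl | rfl) hadj' <;> rcases hw' with rfl | rfl
        · exact G.loopless.irrefl _ hadj'
        · exact hnadj (G.symm.symm _ _ hadj')
        · exact hnadj hadj'
        · exact G.loopless.irrefl _ hadj'
      rw [this, Set.ncard_empty]
      omega
  constructor
  · intro h
    have hclique : ∀ u v : V, u ≠ v → degN G u = degN G v → G.Adj u v := by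
      intro u v huv hdeg
      by_contra hnadj
      have h2 : 2 ∈ A := (pair_mem u v huv hdeg).2 hnadj
      have := le_csSup hbdd h2
      rw [hA] at this
      rw [regKIndepNum] at h
      omega
    refine ⟨?_, hclique⟩
    by_contra hk
    obtain ⟨u, v, huv, hdeg⟩ := exists_ne_degN_eq G hn
    have hadj := hclique u v huv hdeg
    have h2 : 2 ∈ A := (pair_mem u v huv hdeg).1 hadj (by omega)
    have := le_csSup hbdd h2
    rw [hA] at this
    rw [regKIndepNum] at h
    omega
  · rintro ⟨rfl, hclique⟩
    rw [regKIndepNum]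
    apply le_antisymm
    · apply csSup_le ⟨1, hmem1⟩
      rintro m ⟨S, rfl, hind, hreg⟩
      have hsub : S.Subsingleton := by
        intro a ha b hb
        by_contra hab
        have hadj : G.Adj a b := hclique a b hab (hreg a ha b hb)
        have : b ∈ {u | u ∈ S ∧ G.Adj a u} := ⟨hb, hadj⟩
        have hpos : 0 < {u | u ∈ S ∧ G.Adj a u}.ncard :=
          (Set.ncard_pos (Set.toFinite _)).mpr ⟨b, this⟩
        have := hind a ha
        omega
      rcases hsub.eq_empty_or_singleton with rfl | ⟨a, rfl⟩
      · simp
      · simp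
    · exact le_csSup hbdd hmem1
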